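/- Let T > 0 and let M : [0,T] × [0,1] → ℝ^{4×4} be a continuous family of real symmetric matrices such that det M(t,p) = 0 for all (t,p) ∈ [0,T]×[0,1], and such that for every t ∈ [0,T] the matrix M(t,0) has exactly three strictly negative eigenvalues (counted with multiplicity). Then there exists δ > 0 such that M(t,p) is negative semidefinite for all t ∈ [0,T] and all p ∈ [0,δ). -/
import Mathlib


open Set Matrix

private lemma aux_traces (A : Matrix (Fin 4) (Fin 4) ℝ) (hA : A.IsHermitian) :
    A.trace = ∑ i, hA.eigenvalues i ∧
    (A * A).trace = ∑ i, hA.eigenvalues i ^ 2 ∧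
    (A * A * A).trace = ∑ i, hA.eigenvalues i ^ 3 := by
  set U : Matrix (Fin 4) (Fin 4) ℝ := (hA.eigenvectorUnitary : Matrix (Fin 4) (Fin 4) ℝ) with hUdef
  have hsU : star U * U = 1 := mem_unitaryGroup_iff'.mp hA.eigenvectorUnitary.2
  have hDdef : (diagonal (RCLike.ofReal ∘ hA.eigenvalues) : Matrix (Fin 4) (Fin 4) ℝ)
      = diagonal hA.eigenvalues := by
    rw [RCLike.ofReal_real_eq_id]; rfl
  have hspec : A = U * diagonal hA.eigenvalues * star U := by
    rw [← hDdef]; exact hA.spectral_theorem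
  set D : Matrix (Fin 4) (Fin 4) ℝ := diagonal hA.eigenvalues with hD
  have key : ∀ B C : Matrix (Fin 4) (Fin 4) ℝ,
      (U * B * star U) * (U * C * star U) = U * (B * C) * star U := by
    intro B C
    have h1 : star U * (U * (C * star U)) = C * star U := by
      rw [← Matrix.mul_assoc, hsU, Matrix.one_mul]
    simp only [Matrix.mul_assoc, h1]
  have tr : ∀ B : Matrix (Fin 4) (Fin 4) ℝ, (U * B * star U).trace = B.trace := by
    intro B
    rw [Matrix.trace_mul_cycle, hsU, Matrix.one_mul]
  have h1 : (U * D * star U).trace = D.trace := tr D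
  rw [← hspec] at h1
  have e2 : (U * D * star U) * (U * D * star U) = U * (D * D) * star U := key D D
  rw [← hspec] at e2
  have h2 : (A * A).trace = (D * D).trace := by rw [e2, tr]
  have e3 : (U * (D * D) * star U) * (U * D * star U) = U * (D * D * D) * star U := key (D * D) D
  rw [← e2, ← hspec] at e3
  have h3 : (A * A * A).trace = (D * D * D).trace := by rw [e3, tr]
  refine ⟨?_, ?_, ?_⟩
  · rw [h1, hD, trace_diagonal]
  · rw [h2, hD, diagonal_mul_diagonal, trace_diagonal]
    exact Finset.sum_congr rfl fun i _ => (sq _).symm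
  · rw [h3, hD, diagonal_mul_diagonal, diagonal_mul_diagonal, trace_diagonal]
    exact Finset.sum_congr rfl fun i _ => by ring

private lemma aux_negcase (l : Fin 4 → ℝ) (j : Fin 4) (hj : l j = 0)
    (h : ∀ i, i ≠ j → l i < 0) :
    (∑ i, l i) < 0 ∧ 0 < ((∑ i, l i) ^ 2 - ∑ i, l i ^ 2) / 2 ∧
      ((∑ i, l i) ^ 3 - 3 * (∑ i, l i) * (∑ i, l i ^ 2) + 2 * ∑ i, l i ^ 3) / 6 < 0 := by
  simp only [Fin.sum_univ_four]
  fin_cases j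
  · have h1 := h 1 (by decide)
    have h2 := h 2 (by decide)
    have h3 := h 3 (by decide)
    have hj0 : l 0 = 0 := hj
    rw [hj0]
    refine ⟨by linarith, ?_, ?_⟩
    · nlinarith [mul_pos_of_neg_of_neg h1 h2, mul_pos_of_neg_of_neg h1 h3,
        mul_pos_of_neg_of_neg h2 h3]
    · nlinarith [mul_neg_of_pos_of_neg (mul_pos_of_neg_of_neg h1 h2) h3]
  · have h1 := h 0 (by decide)
    have h2 := h 2 (by decide)
    have h3 := h 3 (by decide)
    have hj0 : l 1 = 0 := hj
    rw [hj0]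
    refine ⟨by linarith, ?_, ?_⟩
    · nlinarith [mul_pos_of_neg_of_neg h1 h2, mul_pos_of_neg_of_neg h1 h3,
        mul_pos_of_neg_of_neg h2 h3]
    · nlinarith [mul_neg_of_pos_of_neg (mul_pos_of_neg_of_neg h1 h2) h3]
  · have h1 := h 0 (by decide)
    have h2 := h 1 (by decide)
    have h3 := h 3 (by decide)
    have hj0 : l 2 = 0 := hj
    rw [hj0]
    refine ⟨by linarith, ?_, ?_⟩
    · nlinarith [mul_pos_of_neg_of_neg h1 h2, mul_pos_of_neg_of_neg h1 h3,
        mul_pos_of_neg_of_neg h2 h3]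
    · nlinarith [mul_neg_of_pos_of_neg (mul_pos_of_neg_of_neg h1 h2) h3]
  · have h1 := h 0 (by decide)
    have h2 := h 1 (by decide)
    have h3 := h 2 (by decide)
    have hj0 : l 3 = 0 := hj
    rw [hj0]
    refine ⟨by linarith, ?_, ?_⟩
    · nlinarith [mul_pos_of_neg_of_neg h1 h2, mul_pos_of_neg_of_neg h1 h3,
        mul_pos_of_neg_of_neg h2 h3]
    · nlinarith [mul_neg_of_pos_of_neg (mul_pos_of_neg_of_neg h1 h2) h3]

private lemma aux_main (A : Matrix (Fin 4) (Fin 4) ℝ) (hA : A.IsHermitian)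
    (hdet : A.det = 0)
    (h1 : A.trace < 0)
    (h2 : 0 < (A.trace ^ 2 - (A * A).trace) / 2)
    (h3 : (A.trace ^ 3 - 3 * A.trace * (A * A).trace + 2 * (A * A * A).trace) / 6 < 0) :
    (-A).PosSemidef := by
  obtain ⟨e1, e2, e3⟩ := aux_traces A hA
  have hp : (∏ k, hA.eigenvalues k) = 0 := by
    have h := hA.det_eq_prod_eigenvalues
    rw [hdet, RCLike.ofReal_real_eq_id] at h
    simpa using h.symm
  rw [e1] at h1
  rw [e1, e2] at h2
  rw [e1, e2, e3] at h3
  have hle : ∀ i, hA.eigenvalues i ≤ 0 := by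
    intro i
    by_contra hpos
    push_neg at hpos
    have hz : ∏ k, (hA.eigenvalues i - hA.eigenvalues k) = 0 :=
      Finset.prod_eq_zero (Finset.mem_univ i) (sub_self _)
    rw [Fin.prod_univ_four] at hz hp
    simp only [Fin.sum_univ_four] at h1 h2 h3
    set μ := hA.eigenvalues i with hμ
    set a := hA.eigenvalues 0 with ha
    set b := hA.eigenvalues 1 with hb
    set c := hA.eigenvalues 2 with hc
    set d := hA.eigenvalues 3 with hd
    have hz' : μ ^ 4 - (a + b + c + d) * μ ^ 3
        + (a*b + a*c + a*d + b*c + b*d + c*d) * μ ^ 2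
        - (a*b*c + a*b*d + a*c*d + b*c*d) * μ + a*b*c*d = 0 := by
      linear_combination hz
    have he2 : 0 < a*b + a*c + a*d + b*c + b*d + c*d := by nlinarith [h2]
    have he3 : a*b*c + a*b*d + a*c*d + b*c*d < 0 := by nlinarith [h3]
    have t1 : 0 < μ ^ 4 := by positivity
    have t2 : 0 < (-(a + b + c + d)) * μ ^ 3 := mul_pos (by linarith) (by positivity)
    have t3 : 0 < (a*b + a*c + a*d + b*c + b*d + c*d) * μ ^ 2 :=
      mul_pos he2 (by positivity)
    have t4 : 0 < (-(a*b*c + a*b*d + a*c*d + b*c*d)) * μ := mul_pos (by linarith) hpos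
    have final : μ ^ 4 + (-(a + b + c + d)) * μ ^ 3
        + (a*b + a*c + a*d + b*c + b*d + c*d) * μ ^ 2
        + (-(a*b*c + a*b*d + a*c*d + b*c*d)) * μ = 0 := by
      linear_combination hz' - hp
    linarith [t1, t2, t3, t4, final]
  set U : Matrix (Fin 4) (Fin 4) ℝ := (hA.eigenvectorUnitary : Matrix (Fin 4) (Fin 4) ℝ)
  have hDdef : (diagonal (RCLike.ofReal ∘ hA.eigenvalues) : Matrix (Fin 4) (Fin 4) ℝ)
      = diagonal hA.eigenvalues := by
    rw [RCLike.ofReal_real_eq_id]; rfl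
  have hspec : A = U * diagonal hA.eigenvalues * star U := by
    rw [← hDdef]; exact hA.spectral_theorem
  have hnegA : -A = U * diagonal (fun i => -(hA.eigenvalues i)) * Uᴴ := by
    rw [← Matrix.star_eq_conjTranspose]
    conv_lhs => rw [hspec]
    have hdn : (Matrix.diagonal fun i => -(hA.eigenvalues i)) = -(Matrix.diagonal hA.eigenvalues) := by
      rw [← Matrix.diagonal_neg]
    rw [hdn, Matrix.mul_neg, Matrix.neg_mul]
  rw [hnegA]
  exact PosSemidef.mul_mul_conjTranspose_same
    (posSemidef_diagonal_iff.mpr fun i => by simpa using hle i) U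

/-- Let `M : [0,T] × [0,1] → ℝ^{4×4}` be a continuous family
of real symmetric matrices with identically vanishing determinant such that for
every `t`, the matrix `M(t,0)` has exactly three strictly negative eigenvalues
(with multiplicity). Then there is `δ > 0` such that `M(t,p)` is negative
semidefinite for all `t ∈ [0,T]` and `p ∈ [0,δ)`. -/
theorem stmt_10 (T : ℝ) (hT : 0 < T)
    (M : ℝ → ℝ → Matrix (Fin 4) (Fin 4) ℝ)
    (hcont : ∀ i j, ContinuousOn (fun q : ℝ × ℝ => M q.1 q.2 i j)
      (Icc 0 T ×ˢ Icc 0 1))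
    (hsymm : ∀ t ∈ Icc (0 : ℝ) T, ∀ p ∈ Icc (0 : ℝ) 1, (M t p)ᵀ = M t p)
    (hdet : ∀ t ∈ Icc (0 : ℝ) T, ∀ p ∈ Icc (0 : ℝ) 1, (M t p).det = 0)
    (hneg : ∀ t ∈ Icc (0 : ℝ) T, ∃ hH : (M t 0).IsHermitian,
      (Finset.univ.filter fun i => hH.eigenvalues i < 0).card = 3) :
    ∃ δ > 0, ∀ t ∈ Icc (0 : ℝ) T, ∀ p : ℝ, 0 ≤ p → p < δ →
      (-(M t p)).PosSemidef := by
  classical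
  set K : Set (ℝ × ℝ) := Icc 0 T ×ˢ Icc 0 1 with hK
  set f1 : ℝ × ℝ → ℝ := fun q => (M q.1 q.2).trace with hf1
  set f2 : ℝ × ℝ → ℝ := fun q => ((M q.1 q.2) * (M q.1 q.2)).trace with hf2
  set f3 : ℝ × ℝ → ℝ :=
    fun q => ((M q.1 q.2) * (M q.1 q.2) * (M q.1 q.2)).trace with hf3
  have hc1 : ContinuousOn f1 K := by
    simp only [hf1, Matrix.trace, Matrix.diag]
    exact continuousOn_finset_sum _ fun i _ => hcont i i
  have hc2 : ContinuousOn f2 K := by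
    simp only [hf2, Matrix.trace, Matrix.diag, Matrix.mul_apply]
    exact continuousOn_finset_sum _ fun i _ =>
      continuousOn_finset_sum _ fun j _ => (hcont i j).mul (hcont j i)
  have hc3 : ContinuousOn f3 K := by
    simp only [hf3, Matrix.trace, Matrix.diag, Matrix.mul_apply, Finset.sum_mul]
    exact continuousOn_finset_sum _ fun i _ =>
      continuousOn_finset_sum _ fun j _ =>
        continuousOn_finset_sum _ fun k _ =>
          ((hcont i k).mul (hcont k j)).mul (hcont j i)
  set g : ℝ × ℝ → ℝ := fun q =>
    max (f1 q) (max (-((f1 q ^ 2 - f2 q) / 2))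
      ((f1 q ^ 3 - 3 * f1 q * f2 q + 2 * f3 q) / 6)) with hg
  have hcg : ContinuousOn g K := by
    apply ContinuousOn.sup hc1
    apply ContinuousOn.sup
    · exact (((hc1.pow 2).sub hc2).div_const 2).neg
    · exact (((hc1.pow 3).sub ((continuousOn_const.mul hc1).mul hc2)).add
        (continuousOn_const.mul hc3)).div_const 6
  have hHerm : ∀ t ∈ Icc (0 : ℝ) T, ∀ p ∈ Icc (0 : ℝ) 1, (M t p).IsHermitian := by
    intro t ht p hp
    have h := hsymm t ht p hp
    show (M t p)ᴴ = M t p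
    rw [Matrix.conjTranspose_eq_transpose_of_trivial]
    exact h
  have hg0 : ∀ t ∈ Icc (0 : ℝ) T, g (t, 0) < 0 := by
    intro t ht
    obtain ⟨hH, hcard⟩ := hneg t ht
    have h01 : (0 : ℝ) ∈ Icc (0 : ℝ) 1 := by constructor <;> norm_num
    have hd0 : (M t 0).det = 0 := hdet t ht 0 h01
    obtain ⟨e1, e2, e3⟩ := aux_traces (M t 0) hH
    have hp : (∏ k, hH.eigenvalues k) = 0 := by
      have h := hH.det_eq_prod_eigenvalues
      rw [hd0, RCLike.ofReal_real_eq_id] at h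
      simpa using h.symm
    obtain ⟨j, -, hj⟩ := Finset.prod_eq_zero_iff.mp hp
    have hsubset : (Finset.univ.filter fun i => hH.eigenvalues i < 0)
        ⊆ Finset.univ.erase j := by
      intro i hi
      rcases Finset.mem_filter.mp hi with ⟨-, hlt⟩
      refine Finset.mem_erase.mpr ⟨?_, Finset.mem_univ i⟩
      rintro rfl; rw [hj] at hlt; exact lt_irrefl 0 hlt
    have hcard' : (Finset.univ.erase j).card = 3 := by
      rw [Finset.card_erase_of_mem (Finset.mem_univ j)]
      simp
    have heq : (Finset.univ.filter fun i => hH.eigenvalues i < 0)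
        = Finset.univ.erase j :=
      Finset.eq_of_subset_of_card_le hsubset (by rw [hcard', hcard])
    have hall : ∀ i, i ≠ j → hH.eigenvalues i < 0 := by
      intro i hi
      have hmem : i ∈ Finset.univ.erase j := Finset.mem_erase.mpr ⟨hi, Finset.mem_univ i⟩
      rw [← heq] at hmem
      exact (Finset.mem_filter.mp hmem).2
    obtain ⟨c1, c2, c3⟩ := aux_negcase hH.eigenvalues j hj hall
    have hv1 : f1 (t, 0) = ∑ i, hH.eigenvalues i := e1
    have hv2 : f2 (t, 0) = ∑ i, hH.eigenvalues i ^ 2 := e2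
    have hv3 : f3 (t, 0) = ∑ i, hH.eigenvalues i ^ 3 := e3
    have : g (t, 0) = max (f1 (t,0)) (max (-((f1 (t,0) ^ 2 - f2 (t,0)) / 2))
      ((f1 (t,0) ^ 3 - 3 * f1 (t,0) * f2 (t,0) + 2 * f3 (t,0)) / 6)) := rfl
    rw [this, hv1, hv2, hv3, max_lt_iff, max_lt_iff]
    exact ⟨c1, by linarith, c3⟩
  have hKc : IsCompact K := (isCompact_Icc).prod isCompact_Icc
  set S : Set (ℝ × ℝ) := K ∩ g ⁻¹' Ici 0 with hS
  have hSc : IsCompact S := hKc.of_isClosed_subset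
    (hcg.preimage_isClosed_of_isClosed hKc.isClosed isClosed_Ici)
    Set.inter_subset_left
  have main : ∀ δ' : ℝ, 0 < δ' → (∀ q ∈ S, δ' ≤ q.2) →
      ∀ t ∈ Icc (0 : ℝ) T, ∀ p : ℝ, 0 ≤ p → p < min δ' 1 → (-(M t p)).PosSemidef := by
    intro δ' hδ' hlb t ht p hp0 hpδ
    have hp1 : p ∈ Icc (0 : ℝ) 1 := ⟨hp0, le_of_lt (lt_of_lt_of_le hpδ (min_le_right _ _))⟩
    have hmem : ((t, p) : ℝ × ℝ) ∈ K := ⟨ht, hp1⟩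
    have hgneg : g (t, p) < 0 := by
      by_contra hge
      push_neg at hge
      have := hlb (t, p) ⟨hmem, hge⟩
      have h2 : p < δ' := lt_of_lt_of_le hpδ (min_le_left _ _)
      simp only at this
      linarith
    rw [show g (t, p) = max (f1 (t,p)) (max (-((f1 (t,p) ^ 2 - f2 (t,p)) / 2))
      ((f1 (t,p) ^ 3 - 3 * f1 (t,p) * f2 (t,p) + 2 * f3 (t,p)) / 6)) from rfl,
      max_lt_iff, max_lt_iff] at hgneg
    obtain ⟨g1, ⟨g2, g3⟩⟩ := hgneg
    exact aux_main (M t p) (hHerm t ht p hp1) (hdet t ht p hp1) g1 (by linarith) g3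
  by_cases hne : S.Nonempty
  · obtain ⟨q0, hq0, hmin⟩ := hSc.exists_isMinOn hne continuous_snd.continuousOn
    have hq0pos : 0 < q0.2 := by
      rcases lt_or_eq_of_le (hq0.1.2.1 : (0:ℝ) ≤ q0.2) with h | h
      · exact h
      · exfalso
        have hlt : g (q0.1, 0) < 0 := hg0 q0.1 hq0.1.1
        have hq0' : ((q0.1, (0:ℝ)) : ℝ × ℝ) = q0 := by
          rw [Prod.ext_iff]; exact ⟨rfl, h⟩
        rw [hq0'] at hlt
        have := hq0.2
        simp only [Set.mem_preimage, Set.mem_Ici] at this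
        linarith
    exact ⟨min q0.2 1, lt_min hq0pos one_pos,
      main q0.2 hq0pos (fun q hq => hmin hq) ⟩
  · refine ⟨min 1 1, by norm_num, main 1 one_pos ?_⟩
    intro q hq
    exact absurd ⟨q, hq⟩ hne
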